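/- Let X be a non-empty connected noetherian scheme and f : X' → X a proper surjective morphism of noetherian schemes. Define a graph Γ whose vertices are the connected components of X' and whose edges are the connected components of X'' = X' ×_X X', with an edge e joining the components pr₁(e) and pr₂(e). Then the graph Γ is connected. -/

import Mathlib

open AlgebraicGeometry CategoryTheory CategoryTheory.Limits

open TopologicalSpace in
lemma finite_connectedComponents_of_noetherian {α : Type*} [TopologicalSpace α]
    [NoetherianSpace α] : Finite (ConnectedComponents α) := by
  have h : (irreducibleComponents α).Finite :=
    NoetherianSpace.finite_irreducibleComponents
  have : Finite (irreducibleComponents α) := h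
  apply Finite.of_surjective
    (fun t : irreducibleComponents α => ConnectedComponents.mk t.2.1.1.some)
  rintro ⟨x⟩
  refine ⟨⟨irreducibleComponent x, irreducibleComponent_mem_irreducibleComponents x⟩, ?_⟩
  have ht : IsIrreducible (irreducibleComponent x) :=
    (irreducibleComponent_mem_irreducibleComponents x).1
  show ConnectedComponents.mk _ = ConnectedComponents.mk x
  rw [ConnectedComponents.coe_eq_coe']
  exact ht.isPreirreducible.isPreconnected.subset_connectedComponent
    mem_irreducibleComponent ht.1.some_mem

lemma isClosed_preimage_mk {α : Type*} [TopologicalSpace α] [Finite (ConnectedComponents α)]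
    (T : Set (ConnectedComponents α)) : IsClosed (ConnectedComponents.mk ⁻¹' T) := by
  have : T = ⋃ c ∈ T, {c} := by simp
  rw [this, Set.preimage_iUnion₂]
  apply Set.Finite.isClosed_biUnion T.toFinite
  intro c _
  obtain ⟨x, rfl⟩ := ConnectedComponents.surjective_coe c
  rw [connectedComponents_preimage_singleton]
  exact isClosed_connectedComponent

/-- Let `f : X' ⟶ X` be a proper surjective morphism of noetherian schemes with
`X` connected. Form the graph whose vertices are the connected components of `X'` and whose
edges are the connected components of `X'' = X' ×_X X'`, an edge `e` joining the components of
`pr₁(e)` and `pr₂(e)`. Then this graph is connected: any two vertices are joined by a walk. -/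
theorem component_graph_connected
    (X X' : AlgebraicGeometry.Scheme) [IsNoetherian X] [IsNoetherian X']
    [Nonempty X] [ConnectedSpace X]
    (f : X' ⟶ X) (hp : IsProper f) (hs : Function.Surjective f.base) :
    ∀ v w : _root_.ConnectedComponents X',
      Relation.ReflTransGen
        (fun v w =>
          ∃ z : ↥(pullback f f),
            (ConnectedComponents.mk ((pullback.fst f f).base z) = v ∧
              ConnectedComponents.mk ((pullback.snd f f).base z) = w) ∨
            (ConnectedComponents.mk ((pullback.fst f f).base z) = w ∧
              ConnectedComponents.mk ((pullback.snd f f).base z) = v))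
        v w := by
  haveI : IsProper f := hp
  haveI : Finite (_root_.ConnectedComponents X') := finite_connectedComponents_of_noetherian
  set r : _root_.ConnectedComponents X' → _root_.ConnectedComponents X' → Prop := fun v w =>
    ∃ z : ↥(pullback f f),
      (ConnectedComponents.mk ((pullback.fst f f).base z) = v ∧
        ConnectedComponents.mk ((pullback.snd f f).base z) = w) ∨
      (ConnectedComponents.mk ((pullback.fst f f).base z) = w ∧
        ConnectedComponents.mk ((pullback.snd f f).base z) = v) with hr
  intro v w
  set S : Set X' := ConnectedComponents.mk ⁻¹' {c | Relation.ReflTransGen r v c} with hS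
  have hScl : IsClosed S := isClosed_preimage_mk _
  have hSccl : IsClosed Sᶜ := by
    have : Sᶜ = ConnectedComponents.mk ⁻¹' {c | Relation.ReflTransGen r v c}ᶜ := rfl
    rw [this]; exact isClosed_preimage_mk _
  have hcm : IsClosedMap f.base := f.isClosedMap
  have hA : IsClosed (f.base '' S) := hcm _ hScl
  have hB : IsClosed (f.base '' Sᶜ) := hcm _ hSccl
  -- disjointness
  have hdisj : ∀ x, x ∈ f.base '' S → x ∈ f.base '' Sᶜ → False := by
    rintro x ⟨a, ha, rfl⟩ ⟨b, hb, hab⟩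
    apply hb
    obtain ⟨z, hz1, hz2⟩ := Scheme.Pullback.exists_preimage_pullback a b hab.symm
    refine Relation.ReflTransGen.tail ha ⟨z, Or.inl ⟨?_, ?_⟩⟩
    · rw [hz1]
    · rw [hz2]
  -- f '' S is nonempty
  obtain ⟨y, rfl⟩ := ConnectedComponents.surjective_coe v
  have hyS : y ∈ S := Relation.ReflTransGen.refl
  -- f '' S is clopen
  have hcompl : (f.base '' S)ᶜ = f.base '' Sᶜ := by
    ext x
    constructor
    · intro hx
      obtain ⟨a, rfl⟩ := hs x
      rcases Classical.em (a ∈ S) with h | h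
      · exact absurd ⟨a, h, rfl⟩ hx
      · exact ⟨a, h, rfl⟩
    · intro hx hx'
      exact hdisj x hx' hx
  have hclopen : IsClopen (f.base '' S) :=
    ⟨hA, by rw [← isClosed_compl_iff, hcompl]; exact hB⟩
  have huniv : f.base '' S = Set.univ :=
    hclopen.eq_univ ⟨f.base y, y, hyS, rfl⟩
  -- hence S = univ
  have hSuniv : ∀ b : X', b ∈ S := by
    intro b
    by_contra hb
    have : f.base b ∈ (f.base '' S)ᶜ := by rw [hcompl]; exact ⟨b, hb, rfl⟩
    rw [huniv] at this
    simp at this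
  obtain ⟨y', rfl⟩ := ConnectedComponents.surjective_coe w
  exact hSuniv y'
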